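/- Let (1, α₁, …, α_n) be a vector of real numbers whose components are linearly independent over the field ℚ of rational numbers, let β₁, …, β_n be arbitrary real numbers, and let ε satisfy 0 < ε < 0.5. Then there exists a constant c = c(α₁,…,α_n, ε) > 0 such that every interval of real numbers of length c contains at least one value t for which the inequalities ‖t·α_j + β_j‖ < ε hold simultaneously for all j = 1, …, n. -/

import Mathlib

open Real

open Finset


lemma cos_pow_expansion (m : ℕ) (θ : ℝ) :
    ((Real.cos (π * θ) : ℂ)) ^ (2 * m) =
      (∑ a ∈ Finset.range (2 * m + 1),
        (Nat.choose (2 * m) a : ℂ) *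
          Complex.exp (2 * π * Complex.I * (((a : ℂ) - m) * θ))) / 4 ^ m := by
  have hw : (Real.cos (π * θ) : ℂ) = (Complex.exp (π * θ * Complex.I) + Complex.exp (-(π * θ * Complex.I))) / 2 := by
    rw [Complex.ofReal_cos, Complex.cos, Complex.ofReal_mul]
    ring_nf
  rw [hw, div_pow]
  have h2 : ((2:ℂ))^(2*m) = 4^m := by
    rw [pow_mul]; norm_num
  rw [h2, add_pow]
  congr 1
  refine Finset.sum_congr rfl fun a ha => ?_
  rw [Finset.mem_range] at ha
  have ha' : a ≤ 2*m := Nat.lt_succ_iff.mp ha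
  rw [← Complex.exp_nat_mul, ← Complex.exp_nat_mul, ← Complex.exp_add]
  rw [mul_comm]
  congr 2
  have : ((2*m - a : ℕ) : ℂ) = 2*m - a := by
    push_cast [Nat.cast_sub ha']; ring
  rw [this]
  ring

lemma prod_cos_expansion (n m : ℕ) (θ : Fin n → ℝ) :
    ((∏ j, Real.cos (π * θ j) ^ (2*m) : ℝ) : ℂ) =
      ∑ A ∈ Fintype.piFinset (fun _ : Fin n => Finset.range (2*m+1)),
        (((∏ j, (Nat.choose (2*m) (A j) : ℝ)) / 4^(m*n) : ℝ) : ℂ) *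
          Complex.exp (2*π*Complex.I * ((∑ j, ((A j : ℝ) - m) * θ j : ℝ) : ℂ)) := by
  simp only [Complex.ofReal_prod, Complex.ofReal_pow, Complex.ofReal_div, Complex.ofReal_sum,
    Complex.ofReal_mul, Complex.ofReal_sub, Complex.ofReal_natCast, Complex.ofReal_ofNat]
  have h1 : ∀ j : Fin n, ((Real.cos (π * θ j) : ℂ)) ^ (2*m) =
      (∑ a ∈ Finset.range (2 * m + 1),
        (Nat.choose (2 * m) a : ℂ) *
          Complex.exp (2 * π * Complex.I * (((a : ℂ) - m) * θ j))) / 4 ^ m :=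
    fun j => cos_pow_expansion m (θ j)
  calc (∏ j, ((Real.cos (π * θ j) : ℂ)) ^ (2*m))
      = (∏ j, ∑ a ∈ Finset.range (2 * m + 1),
          (Nat.choose (2 * m) a : ℂ) *
            Complex.exp (2 * π * Complex.I * (((a : ℂ) - m) * θ j))) / (4:ℂ) ^ (m*n) := by
        simp only [h1, Finset.prod_div_distrib, Finset.prod_const, Finset.card_univ,
          Fintype.card_fin, ← pow_mul]
    _ = _ := by
        rw [Finset.prod_univ_sum]
        rw [Finset.sum_div]
        refine Finset.sum_congr rfl fun A hA => ?_
        rw [Finset.prod_mul_distrib, ← Complex.exp_sum]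
        have : (∑ j, 2*π*Complex.I*(((A j : ℂ) - m) * θ j)) =
            2*π*Complex.I*(∑ j, ((A j : ℂ) - m) * (θ j : ℂ)) := by
          rw [Finset.mul_sum]
        rw [this]
        ring


set_option maxHeartbeats 2000000 in
/-- Corollary of Lemma 6 (inhomogeneous version): if `1, α₁, …, α_n` are linearly
independent over `ℚ`, `β₁, …, β_n` are arbitrary reals and `0 < ε < 1/2`, then there is a
constant `c > 0` such that every interval of length `c` contains a point `t` with
`‖t αⱼ + βⱼ‖ < ε` (distance to the nearest integer) for all `j = 1, …, n`. -/
theorem dirichlet_approx_inhomogeneous (n : ℕ) (α β : Fin n → ℝ)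
    (hα : LinearIndependent ℚ (Fin.cons (1 : ℝ) α))
    (ε : ℝ) (hε0 : 0 < ε) (hε : ε < 1 / 2) :
    ∃ c : ℝ, 0 < c ∧ ∀ x : ℝ, ∃ t ∈ Set.Icc x (x + c),
      ∀ j : Fin n, |t * α j + β j - round (t * α j + β j)| < ε := by
  classical
  have hπ : 0 < π := Real.pi_pos
  -- linear independence of α alone
  have hαind : LinearIndependent ℚ α := by
    have h := hα.comp Fin.succ (Fin.succ_injective n)
    have he : (Fin.cons (1:ℝ) α ∘ Fin.succ) = α := by
      funext j; simp
    rwa [he] at h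
  -- the quantity q
  set q : ℝ := (1 + Real.cos (2*π*ε))/2 with hqdef
  have hcos1 : Real.cos (2*π*ε) < 1 := by
    have h1 : Real.cos (2*π*ε) < Real.cos 0 := by
      apply Real.cos_lt_cos_of_nonneg_of_le_pi le_rfl
      · nlinarith
      · positivity
    simpa using h1
  have hcosm1 : -1 ≤ Real.cos (2*π*ε) := Real.neg_one_le_cos _
  have hq0 : 0 ≤ q := by simp only [hqdef]; linarith
  have hq1 : q < 1 := by simp only [hqdef]; linarith
  -- choose m
  obtain ⟨m, hm1, hmq⟩ : ∃ m : ℕ, 1 ≤ m ∧ 2 * (2*(m:ℝ))^n * q^m < 1 := by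
    have h0 : Filter.Tendsto (fun m : ℕ => 2 * (2*(m:ℝ))^n * q^m) Filter.atTop (nhds 0) := by
      have h1 : Filter.Tendsto (fun m : ℕ => (m:ℝ)^n * q^m) Filter.atTop (nhds 0) :=
        tendsto_pow_const_mul_const_pow_of_abs_lt_one n (by rwa [abs_of_nonneg hq0])
      have h2 := h1.const_mul (2 * 2^n)
      rw [mul_zero] at h2
      refine h2.congr fun m => ?_
      rw [mul_pow]; ring
    have h3 := h0.eventually (eventually_lt_nhds (by norm_num : (0:ℝ) < 1))
    obtain ⟨m, hm⟩ := (h3.and (Filter.eventually_ge_atTop 1)).exists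
    exact ⟨m, hm.2, hm.1⟩
  have hmR : (1:ℝ) ≤ (m:ℝ) := by exact_mod_cast hm1
  -- combinatorial data
  set S := Fintype.piFinset (fun _ : Fin n => Finset.range (2*m+1)) with hSdef
  set A₀ : Fin n → ℕ := fun _ => m with hA₀def
  have hA₀S : A₀ ∈ S := by
    simp only [hSdef, Fintype.mem_piFinset]
    intro j; simp only [hA₀def, Finset.mem_range]; omega
  set P : (Fin n → ℕ) → ℝ := fun A => ∏ j, (Nat.choose (2*m) (A j) : ℝ) with hPdef
  set ω : (Fin n → ℕ) → ℝ := fun A => ∑ j, ((A j : ℝ) - m) * α j with hωdef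
  set bb : (Fin n → ℕ) → ℝ := fun A => ∑ j, ((A j : ℝ) - m) * β j with hbdef
  have hω0 : ω A₀ = 0 := by simp [hωdef, hA₀def]
  have hb0 : bb A₀ = 0 := by simp [hbdef, hA₀def]
  have hP0 : ∀ A, 0 ≤ P A := fun A => Finset.prod_nonneg fun j _ => by positivity
  have hωne : ∀ A ∈ S, A ≠ A₀ → ω A ≠ 0 := by
    intro A hAS hA hω
    apply hA
    set g : Fin n → ℚ := fun j => (A j : ℚ) - m with hgdef
    have hg : ∑ j, g j • α j = 0 := by
      have h1 : ∀ j, g j • α j = ((A j : ℝ) - m) * α j := by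
        intro j; rw [Rat.smul_def]; push_cast [hgdef]; ring
      simp_rw [h1]; exact hω
    have h2 := Fintype.linearIndependent_iff.mp hαind g hg
    funext j
    have h3 := h2 j
    simp only [hgdef, sub_eq_zero] at h3
    exact_mod_cast h3
  -- error constant and main constant
  set E : ℝ := ∑ A ∈ S.erase A₀, P A / 4^(m*n) * (1/(π * |ω A|)) with hEdef
  have hE0 : 0 ≤ E := by
    apply Finset.sum_nonneg
    intro A hA
    have := hP0 A
    positivity
  set K : ℝ := ((Nat.choose (2*m) m : ℝ) / 4^m)^n with hKdef
  have hchoose : (1:ℝ)/(2*m) ≤ (Nat.choose (2*m) m : ℝ) / 4^m := by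
    have hc : (4:ℝ)^m ≤ (2*m : ℕ) * (Nat.choose (2*m) m : ℝ) := by
      have := Nat.four_pow_le_two_mul_self_mul_centralBinom m hm1
      exact_mod_cast this
    rw [div_le_div_iff₀ (by positivity) (by positivity)]
    push_cast at hc ⊢
    nlinarith
  have hKpos : 0 < K := by
    have : (0:ℝ) < (Nat.choose (2*m) m : ℝ) / 4^m := lt_of_lt_of_le (by positivity) hchoose
    positivity
  have hPA₀ : P A₀ / 4^(m*n) = K := by
    simp only [hPdef, hA₀def, hKdef, Finset.prod_const, Finset.card_univ, Fintype.card_fin]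
    rw [div_pow, ← pow_mul]
  have hqK : q^m < K/2 := by
    have h1 : ((1:ℝ)/(2*m))^n ≤ K := by
      apply pow_le_pow_left₀ (by positivity) hchoose
    have h3 : (0:ℝ) < 2*(2*(m:ℝ))^n := by positivity
    have h2 : q^m * (2*(2*(m:ℝ))^n) < 1 := by linarith [hmq]
    have h6 : q^m < 1/(2*(2*(m:ℝ))^n) := by
      rw [lt_div_iff₀ h3] at *
      linarith
    have h7 : ((1:ℝ)/(2*(m:ℝ)))^n/2 = 1/(2*(2*(m:ℝ))^n) := by
      rw [div_pow, one_pow, mul_pow, div_div]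
      ring_nf
    linarith
  -- choice of interval length
  set T : ℝ := max 1 (2*E/K) with hTdef
  have hT1 : (1:ℝ) ≤ T := le_max_left _ _
  have hTpos : 0 < T := lt_of_lt_of_le one_pos hT1
  have hTE : E ≤ K*T/2 := by
    have h1 : 2*E/K ≤ T := le_max_right _ _
    rw [div_le_iff₀ hKpos] at h1
    nlinarith
  refine ⟨T, hTpos, fun x => ?_⟩
  -- the function F
  set F : ℝ → ℝ := fun t => ∏ j, Real.cos (π * (t * α j + β j)) ^ (2*m) with hFdef
  have hFc : Continuous F := by
    apply continuous_finset_prod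
    intro j _
    fun_prop
  have hfac01 : ∀ (t:ℝ) (j : Fin n), 0 ≤ Real.cos (π * (t * α j + β j)) ^ (2*m) ∧
      Real.cos (π * (t * α j + β j)) ^ (2*m) ≤ 1 := by
    intro t j
    constructor
    · rw [pow_mul]; positivity
    · rw [pow_mul]
      apply pow_le_one₀ (by positivity)
      nlinarith [Real.neg_one_le_cos (π * (t * α j + β j)), Real.cos_le_one (π * (t * α j + β j))]
  -- complex expansion of F
  have hexp : ∀ t : ℝ, ((F t : ℝ) : ℂ) = ∑ A ∈ S, ((P A / 4^(m*n) : ℝ) : ℂ) *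
      (Complex.exp (2*π*Complex.I * ((bb A : ℝ) : ℂ)) *
        Complex.exp ((2*π*Complex.I * ((ω A : ℝ) : ℂ)) * (t:ℂ))) := by
    intro t
    rw [hFdef]
    rw [prod_cos_expansion n m (fun j => t * α j + β j)]
    refine Finset.sum_congr rfl fun A hA => ?_
    have harg : (∑ j, ((A j : ℝ) - m) * (t*α j+β j)) = ω A * t + bb A := by
      simp only [hωdef, hbdef]
      rw [Finset.sum_mul, ← Finset.sum_add_distrib]
      exact Finset.sum_congr rfl fun j _ => by ring
    rw [harg]
    rw [Complex.ofReal_add, mul_add, Complex.exp_add]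
    simp only [hPdef, Complex.ofReal_prod, Complex.ofReal_div, Complex.ofReal_natCast,
      Complex.ofReal_pow, Complex.ofReal_ofNat, Complex.ofReal_mul, Complex.ofReal_add]
    ring
  -- integrability
  have hcont : ∀ A : Fin n → ℕ, Continuous fun t : ℝ => ((P A / 4^(m*n) : ℝ) : ℂ) *
      (Complex.exp (2*π*Complex.I * ((bb A : ℝ) : ℂ)) *
        Complex.exp ((2*π*Complex.I * ((ω A : ℝ) : ℂ)) * (t:ℂ))) := by
    intro A
    fun_prop
  set G : (Fin n → ℕ) → ℂ := fun A => ((P A / 4^(m*n) : ℝ) : ℂ) *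
      Complex.exp (2*π*Complex.I * ((bb A : ℝ):ℂ)) *
        ∫ t in x..(x+T), Complex.exp ((2*π*Complex.I * ((ω A : ℝ):ℂ)) * (t:ℂ)) with hGdef
  have hIc : ((∫ t in x..(x+T), F t : ℝ) : ℂ) = ∑ A ∈ S, G A := by
    rw [← intervalIntegral.integral_ofReal]
    calc (∫ t in x..(x+T), ((F t : ℝ):ℂ))
        = ∫ t in x..(x+T), ∑ A ∈ S, ((P A / 4^(m*n) : ℝ) : ℂ) *
            (Complex.exp (2*π*Complex.I * ((bb A : ℝ):ℂ)) *
              Complex.exp ((2*π*Complex.I * ((ω A : ℝ):ℂ)) * (t:ℂ))) := by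
          simp_rw [hexp]
      _ = _ := by
          rw [intervalIntegral.integral_finset_sum (fun A _ => ((hcont A).intervalIntegrable _ _))]
          refine Finset.sum_congr rfl fun A _ => ?_
          rw [intervalIntegral.integral_const_mul, intervalIntegral.integral_const_mul,
            hGdef, ← mul_assoc]
  have hA₀term : G A₀ = ((K*T : ℝ):ℂ) := by
    rw [hGdef]
    simp only [hω0, hb0, hPA₀]
    simp only [Complex.ofReal_zero, mul_zero, zero_mul, Complex.exp_zero, mul_one,
      intervalIntegral.integral_const]
    push_cast
    rw [Complex.real_smul]
    push_cast
    ring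
  set Z : ℂ := ∑ A ∈ S.erase A₀, G A with hZdef
  have hsum : ((∫ t in x..(x+T), F t : ℝ) : ℂ) = ((K*T:ℝ):ℂ) + Z := by
    rw [hIc, ← Finset.add_sum_erase S _ hA₀S, hA₀term]
  have hre : (∫ t in x..(x+T), F t) = K*T + Z.re := by
    have h := congrArg Complex.re hsum
    simpa using h
  have hterm : ∀ A ∈ S.erase A₀, ‖G A‖ ≤ P A / 4^(m*n) * (1/(π*|ω A|)) := by
    intro A hA
    obtain ⟨hAne, hAS⟩ := Finset.mem_erase.mp hA
    have hωA : ω A ≠ 0 := hωne A hAS hAne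
    have hωA' : 0 < |ω A| := abs_pos.mpr hωA
    set cA : ℂ := 2*π*Complex.I * ((ω A:ℝ):ℂ) with hcA
    have hc : cA ≠ 0 := by
      rw [hcA]
      apply mul_ne_zero
      · apply mul_ne_zero
        · apply mul_ne_zero
          · norm_num
          · exact_mod_cast Real.pi_ne_zero
        · exact Complex.I_ne_zero
      · exact_mod_cast hωA
    have hnorm1 : ∀ s : ℝ, ‖Complex.exp (cA * (s:ℂ))‖ = 1 := by
      intro s
      have h1 : cA * (s:ℂ) = ((2*π*(ω A)*s : ℝ):ℂ) * Complex.I := by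
        rw [hcA]; push_cast; ring
      rw [h1, Complex.norm_exp_ofReal_mul_I]
    have hnormb : ‖Complex.exp (2*π*Complex.I * ((bb A : ℝ):ℂ))‖ = 1 := by
      have h1 : (2*π*Complex.I * ((bb A:ℝ):ℂ)) = ((2*π*(bb A) : ℝ):ℂ) * Complex.I := by
        push_cast; ring
      rw [h1, Complex.norm_exp_ofReal_mul_I]
    have hnormc : ‖cA‖ = 2*π*|ω A| := by
      have h1 : cA = ((2*π*(ω A) : ℝ):ℂ) * Complex.I := by
        rw [hcA]; push_cast; ring
      rw [h1, norm_mul, Complex.norm_I,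
        Complex.norm_real, Real.norm_eq_abs, mul_one, abs_mul, abs_mul]
      rw [abs_of_nonneg (by norm_num : (0:ℝ) ≤ 2), abs_of_pos hπ]
    have hPn : ‖((P A / 4^(m*n) : ℝ) : ℂ)‖ = P A / 4^(m*n) := by
      rw [Complex.norm_real, Real.norm_eq_abs, abs_of_nonneg]
      have := hP0 A
      positivity
    set u : ℂ := Complex.exp (cA * (((x+T):ℝ):ℂ)) - Complex.exp (cA * ((x:ℝ):ℂ)) with hu
    have hnum : ‖u‖ ≤ 2 := by
      rw [hu]
      refine (norm_sub_le _ _).trans ?_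
      rw [hnorm1, hnorm1]
      norm_num
    have hint : (∫ t in x..(x+T), Complex.exp (cA * (t:ℂ))) = u / cA := by
      rw [hu]; exact integral_exp_mul_complex hc
    rw [hGdef]
    simp only [← hcA]
    rw [hint, norm_mul, norm_mul, norm_div, hnormb, hnormc, hPn, mul_one]
    calc P A / 4^(m*n) * (‖u‖ / (2*π*|ω A|))
        ≤ P A / 4^(m*n) * (2 / (2*π*|ω A|)) := by
          gcongr
      _ = P A / 4^(m*n) * (1/(π*|ω A|)) := by
          congr 1
          rw [div_eq_div_iff (by positivity) (by positivity)]
          ring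
  have hZb : |Z.re| ≤ E := by
    calc |Z.re| ≤ ‖Z‖ := by exact Complex.abs_re_le_norm _
      _ ≤ ∑ A ∈ S.erase A₀, ‖G A‖ := norm_sum_le _ _
      _ ≤ E := Finset.sum_le_sum hterm
  have hlow : K*T - E ≤ ∫ t in x..(x+T), F t := by
    rw [hre]
    have h1 := (abs_le.mp hZb).1
    linarith
  -- existence of a good t
  have hex : ∃ t ∈ Set.Icc x (x+T), q^m < F t := by
    by_contra hcon
    push_neg at hcon
    have hmono : (∫ t in x..(x+T), F t) ≤ ∫ _t in x..(x+T), q^m := by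
      apply intervalIntegral.integral_mono_on (by linarith)
        (hFc.intervalIntegrable _ _) intervalIntegrable_const
      exact hcon
    rw [intervalIntegral.integral_const, smul_eq_mul] at hmono
    nlinarith
  obtain ⟨t, htmem, htF⟩ := hex
  refine ⟨t, htmem, fun j => ?_⟩
  have hj : q^m < Real.cos (π * (t * α j + β j)) ^ (2*m) := by
    have h2 := Finset.mul_prod_erase Finset.univ
      (fun i => Real.cos (π * (t * α i + β i)) ^ (2*m)) (Finset.mem_univ j)
    have h3 : (∏ i ∈ Finset.univ.erase j, Real.cos (π * (t * α i + β i)) ^ (2*m)) ≤ 1 :=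
      Finset.prod_le_one (fun i _ => (hfac01 t i).1) (fun i _ => (hfac01 t i).2)
    have h4 : (0:ℝ) ≤ ∏ i ∈ Finset.univ.erase j, Real.cos (π * (t * α i + β i)) ^ (2*m) :=
      Finset.prod_nonneg (fun i _ => (hfac01 t i).1)
    have h5 : F t = Real.cos (π * (t * α j + β j)) ^ (2*m) *
        ∏ i ∈ Finset.univ.erase j, Real.cos (π * (t * α i + β i)) ^ (2*m) := by
      rw [hFdef]; exact h2.symm
    nlinarith [(hfac01 t j).1, htF]
  set θ : ℝ := t * α j + β j with hθdef
  have hsq : Real.cos (π*θ)^(2*m) = ((1+Real.cos (2*π*θ))/2)^m := by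
    rw [pow_mul, Real.cos_sq]
    congr 1
    rw [show 2*(π*θ) = 2*π*θ by ring]
    ring
  have hgt : q < (1+Real.cos (2*π*θ))/2 := by
    by_contra hle
    push_neg at hle
    have h6 : (0:ℝ) ≤ (1+Real.cos (2*π*θ))/2 := by
      have := Real.neg_one_le_cos (2*π*θ); linarith
    have h7 := pow_le_pow_left₀ h6 hle m
    rw [hsq] at hj
    linarith
  have hcosθ : Real.cos (2*π*ε) < Real.cos (2*π*θ) := by
    rw [hqdef] at hgt; linarith
  have hd : |θ - (round θ : ℤ)| ≤ 1/2 := abs_sub_round θ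
  by_contra hcon2
  push_neg at hcon2
  have hper : Real.cos (2*π*θ) = Real.cos (2*π*|θ - ((round θ : ℤ):ℝ)|) := by
    rw [show 2*π*θ = 2*π*(θ-((round θ : ℤ):ℝ)) + ((round θ : ℤ):ℝ)*(2*π) by ring,
      Real.cos_add_int_mul_two_pi, ← Real.cos_abs (2*π*(θ - ((round θ : ℤ):ℝ))), abs_mul,
      abs_of_pos (by positivity : (0:ℝ) < 2*π)]
  have hle2 : Real.cos (2*π*|θ-((round θ : ℤ):ℝ)|) ≤ Real.cos (2*π*ε) := by
    apply Real.cos_le_cos_of_nonneg_of_le_pi (by positivity)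
    · nlinarith [hd]
    · nlinarith [hcon2]
  rw [hper] at hcosθ
  linarith
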